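/- Let F: X → P(Y) be such that {φ_{F,w*} : w* ∈ W*} is lower equicontinuous at x₀ ∈ dom F and F(x₀) is compact. Then for any nets x → x₀ in X and w* → w*₀ weakly* in W*, liminf φ_{F,w*}(x) ≥ φ_{F,w*₀}(x₀). -/

import Mathlib

open Pointwise Set Filter Topology

/-- Scalarization of a set `A ⊆ Y` by a weak-star functional: `inf {w(a) : a ∈ A}` in `EReal`
(with `inf ∅ = +∞`). -/
noncomputable def scal {Y : Type*} [AddCommMonoid Y] [Module ℝ Y] [TopologicalSpace Y]
    (w : WeakDual ℝ Y) (A : Set Y) : EReal :=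
  sInf ((fun a => ((w a : ℝ) : EReal)) '' A)

/-- `F` is `C`-convex. -/
def CConvex {X Y : Type*} [AddCommGroup X] [Module ℝ X] [AddCommGroup Y] [Module ℝ Y]
    (F : X → Set Y) (C : Set Y) : Prop :=
  ∀ x₁ x₂ : X, ∀ t : ℝ, t ∈ Set.Icc (0 : ℝ) 1 →
    t • F x₁ + (1 - t) • F x₂ ⊆ F (t • x₁ + (1 - t) • x₂) + C

/-- Lower Dini directional derivative of `φ : X → EReal` at `x` in direction `d`:
`liminf_{t → 0+} (φ (x + t • d) - φ x) * (1/t)`. -/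
noncomputable def diniX {X : Type*} [AddCommGroup X] [Module ℝ X]
    (φ : X → EReal) (x d : X) : EReal :=
  Filter.liminf (fun t : ℝ => (φ (x + t • d) - φ x) * (((1 : ℝ) / t : ℝ) : EReal))
    (nhdsWithin 0 (Set.Ioi 0))

lemma scal_le {Y : Type*} [AddCommMonoid Y] [Module ℝ Y] [TopologicalSpace Y]
    (w : WeakDual ℝ Y) {A : Set Y} {y : Y} (hy : y ∈ A) : scal w A ≤ ((w y : ℝ) : EReal) :=
  sInf_le ⟨y, hy, rfl⟩

lemma le_scal {Y : Type*} [AddCommMonoid Y] [Module ℝ Y] [TopologicalSpace Y]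
    (w : WeakDual ℝ Y) {A : Set Y} {c : ℝ} (h : ∀ y ∈ A, c ≤ w y) :
    ((c : ℝ) : EReal) ≤ scal w A := by
  refine le_sInf ?_
  rintro _ ⟨y, hy, rfl⟩
  exact EReal.coe_le_coe_iff.mpr (h y hy)

lemma ereal_sub_le_of_le_add {a : EReal} {b c : ℝ} (h : (b : EReal) ≤ a + (c : EReal)) :
    ((b - c : ℝ) : EReal) ≤ a := by
  induction a using EReal.rec with
  | bot => simp [EReal.bot_add] at h
  | coe x =>
    rw [← EReal.coe_add] at h
    exact_mod_cast by linarith [(EReal.coe_le_coe_iff.mp h)]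
  | top => exact le_top

lemma ereal_le_of_forall_sub_le {x : EReal} {m : ℝ}
    (h : ∀ ε : ℝ, 0 < ε → ((m - ε : ℝ) : EReal) ≤ x) : (m : EReal) ≤ x := by
  induction x using EReal.rec with
  | bot => exact absurd (le_bot_iff.mp (h 1 one_pos)) (EReal.coe_ne_bot _)
  | coe r =>
    have : ∀ ε : ℝ, 0 < ε → m - ε ≤ r := fun ε hε => EReal.coe_le_coe_iff.mp (h ε hε)
    exact_mod_cast le_of_forall_sub_le this
  | top => exact le_top

theorem stmt_18 {X Y : Type*} [AddCommGroup X] [Module ℝ X] [TopologicalSpace X]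
    [IsTopologicalAddGroup X]
    [AddCommGroup Y] [Module ℝ Y] [TopologicalSpace Y]
    [IsTopologicalAddGroup Y] [ContinuousSMul ℝ Y] [LocallyConvexSpace ℝ Y] [T2Space Y]
    (C : Set Y) (hclosed : IsClosed C) (hconv : Convex ℝ C)
    (hcone : ∀ c ∈ C, ∀ r : ℝ, 0 ≤ r → r • c ∈ C)
    (hint : (interior C).Nonempty) (hCne : C ≠ Set.univ)
    (Wstar : Set (WeakDual ℝ Y)) (hWcpt : IsCompact Wstar)
    (hWsub : ∀ w ∈ Wstar, ∀ c ∈ C, 0 ≤ w c) (hW0 : (0 : WeakDual ℝ Y) ∉ Wstar)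
    (hWbase : ∀ w : WeakDual ℝ Y, (∀ c ∈ C, 0 ≤ w c) → w ≠ 0 →
      ∃ t : ℝ, 0 < t ∧ ∃ w' ∈ Wstar, w = t • w')
    (F : X → Set Y) (x₀ : X) (hx₀ : (F x₀).Nonempty) (hcpt : IsCompact (F x₀))
    (hequi : ∀ ε : ℝ, 0 < ε → ∃ V ∈ nhds (0 : X), ∀ x : X, x - x₀ ∈ V →
      ∀ w ∈ Wstar, scal w (F x₀) ≤ scal w (F x) + ((ε : ℝ) : EReal))
    {ι : Type*} (l : Filter ι) [l.NeBot]
    (xs : ι → X) (w : ι → WeakDual ℝ Y) (w₀ : WeakDual ℝ Y)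
    (hxs : Filter.Tendsto xs l (nhds x₀))
    (hw : ∀ i, w i ∈ Wstar) (hw₀ : w₀ ∈ Wstar) (hconvw : Filter.Tendsto w l (nhds w₀)) :
    scal w₀ (F x₀) ≤ Filter.liminf (fun i => scal (w i) (F (xs i))) l := by
  classical
  -- minimum of `w₀` on the compact set `F x₀`
  obtain ⟨y₀, hy₀K, hy₀min⟩ := hcpt.exists_isMinOn hx₀ (map_continuous w₀).continuousOn
  set m₀ : ℝ := w₀ y₀ with hm₀
  refine le_trans (scal_le w₀ hy₀K) (ereal_le_of_forall_sub_le (fun ε hε => ?_))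
  -- `Wstar` is equicontinuous, thanks to the interior point of `C`
  obtain ⟨e, he⟩ := hint
  have hWne : Wstar.Nonempty := ⟨w₀, hw₀⟩
  obtain ⟨wm, hwmW, hwm⟩ :=
    hWcpt.exists_isMaxOn hWne (WeakDual.eval_continuous e).continuousOn
  set M : ℝ := max (wm e) 1 with hM
  have hMpos : (0 : ℝ) < M := lt_of_lt_of_le one_pos (le_max_right _ _)
  have hMe : ∀ v ∈ Wstar, v e ≤ M := fun v hv => le_trans (hwm hv) (le_max_left _ _)
  have hCnb : C ∈ 𝓝 e := mem_interior_iff_mem_nhds.mp he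
  have hadd : Tendsto (fun u : Y => e + u) (𝓝 0) (𝓝 e) := by
    simpa using (by fun_prop : Continuous fun u : Y => e + u).tendsto (0 : Y)
  have hsub : Tendsto (fun u : Y => e - u) (𝓝 0) (𝓝 e) := by
    simpa using (by fun_prop : Continuous fun u : Y => e - u).tendsto (0 : Y)
  have hW0' : {u : Y | e + u ∈ C ∧ e - u ∈ C} ∈ 𝓝 (0 : Y) :=
    Filter.inter_mem (hadd hCnb) (hsub hCnb)
  have habs : ∀ v ∈ Wstar, ∀ u : Y, e + u ∈ C → e - u ∈ C → |v u| ≤ M := by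
    intro v hv u h1 h2
    have a1 := hWsub v hv _ h1
    have a2 := hWsub v hv _ h2
    rw [map_add] at a1
    rw [map_sub] at a2
    have a3 := hMe v hv
    rw [abs_le]
    constructor <;> linarith
  have hequiW : ∀ δ : ℝ, 0 < δ → ∃ V ∈ 𝓝 (0 : Y), ∀ v ∈ Wstar, ∀ u ∈ V, |v u| ≤ δ := by
    intro δ hδ
    refine ⟨(fun u : Y => (M / δ) • u) ⁻¹' {u : Y | e + u ∈ C ∧ e - u ∈ C}, ?_, ?_⟩
    · have hc : Tendsto (fun u : Y => (M / δ) • u) (𝓝 0) (𝓝 (0 : Y)) := by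
        simpa using (continuous_const_smul (M / δ) : Continuous fun u : Y => (M/δ) • u).tendsto (0 : Y)
      exact hc hW0'
    · intro v hv u hu
      have h := habs v hv _ hu.1 hu.2
      rw [map_smul, smul_eq_mul, abs_mul, abs_of_pos (div_pos hMpos hδ)] at h
      rw [div_mul_eq_mul_div, div_le_iff₀ hδ] at h
      exact le_of_mul_le_mul_left h hMpos
  set δ : ℝ := ε / 8 with hδdef
  have hδ : (0 : ℝ) < δ := by positivity
  obtain ⟨V, hV, hVb⟩ := hequiW δ hδ
  -- finite subcover of `F x₀`
  have hnhds : ∀ y ∈ F x₀, {z : Y | z - y ∈ V} ∈ 𝓝 y := by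
    intro y _
    have hcc : Continuous fun z : Y => z - y := continuous_id.sub continuous_const
    have hc : Tendsto (fun z : Y => z - y) (𝓝 y) (𝓝 (0 : Y)) := by
      simpa using hcc.tendsto y
    exact hc hV
  obtain ⟨t, htK, hcover⟩ := hcpt.elim_nhds_subcover (fun y => {z : Y | z - y ∈ V}) hnhds
  -- pointwise convergence on the finite set `t`
  have hpt : ∀ᶠ i in l, ∀ y ∈ t, |w i y - w₀ y| ≤ δ := by
    rw [Filter.eventually_all_finset]
    intro y _
    have hc : Tendsto (fun i => w i y) l (𝓝 (w₀ y)) :=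
      ((WeakDual.eval_continuous y).tendsto w₀).comp hconvw
    filter_upwards [hc (Metric.closedBall_mem_nhds (w₀ y) hδ)] with i hi
    simpa [Real.dist_eq, Metric.mem_closedBall] using hi
  -- the lower equicontinuity hypothesis with `ε/2`
  obtain ⟨V', hV', hV'p⟩ := hequi (ε / 2) (by positivity)
  have hxsev : ∀ᶠ i in l, xs i - x₀ ∈ V' := by
    have hc : Tendsto (fun i => xs i - x₀) l (𝓝 (0 : X)) := by
      simpa using hxs.sub (tendsto_const_nhds (x := x₀))
    exact hc hV'
  refine Filter.le_liminf_of_le (by isBoundedDefault) ?_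
  filter_upwards [hpt, hxsev] with i hi hxi
  have hlow : ((m₀ - 3 * δ : ℝ) : EReal) ≤ scal (w i) (F x₀) := by
    refine le_scal _ (fun z hz => ?_)
    obtain ⟨y, hyt, hzy⟩ := mem_iUnion₂.mp (hcover hz)
    have h1 : |w i (z - y)| ≤ δ := hVb _ (hw i) _ hzy
    have h2 : |w₀ (z - y)| ≤ δ := hVb _ hw₀ _ hzy
    have h3 : |w i y - w₀ y| ≤ δ := hi y hyt
    have h4 : m₀ ≤ w₀ z := hy₀min hz
    rw [map_sub] at h1 h2
    rw [abs_le] at h1 h2 h3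
    linarith [h1.1, h2.2, h3.1]
  have heq : scal (w i) (F x₀) ≤ scal (w i) (F (xs i)) + ((ε / 2 : ℝ) : EReal) :=
    hV'p _ hxi _ (hw i)
  have hkey := ereal_sub_le_of_le_add (le_trans hlow heq)
  refine le_trans ?_ hkey
  exact EReal.coe_le_coe_iff.mpr (by rw [hδdef]; linarith)
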